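/- Let f_upper(x) = a₃ e^{−a₄‖x‖} on ℝⁿ with a₃, a₄ > 0, let 0 < ρ_s ≤ ρ_t (scaling factors with ρ monotone decreasing in time, s ∈ (0, t]), and let θ ∈ [0,1), ε ∈ (0,1). Then for all x, y ∈ ℝⁿ: ∫_{ℝⁿ} ρ_{t}^n ρ_s^n f_upper((x−z)ρ_{t})^{1−θ} f_upper((z−y)ρ_s)^{1−θ} dz ≤ M · e^{−a₄ ε(1−θ)‖x−y‖ρ_s} · ρ_t^n, where M depends only on n, a₃, a₄, θ, ε, and the ratio bound ρ_t/ρ_s is not needed since the sub-convolution of exponentials is bounded using the triangle inequality ‖x−z‖ρ_t + ‖z−y‖ρ_s ≥ ‖x−y‖ρ_s. -/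

import Mathlib

open MeasureTheory Real

lemma aux_exp_bound {b : ℝ} (hb : 0 < b) (n : ℕ) (t : ℝ) (ht : 0 ≤ t) :
    Real.exp (-(b * t)) ≤ (max 1 ((n + 1) / b)) ^ (n + 1) * (1 + t) ^ (-((n : ℝ) + 1)) := by
  set c : ℝ := max 1 ((n + 1) / b) with hc
  have hc1 : (1 : ℝ) ≤ c := le_max_left _ _
  have hc0 : (0 : ℝ) < c := lt_of_lt_of_le one_pos hc1
  have hn : (0 : ℝ) < (n : ℝ) + 1 := by positivity
  have h2 : ((n : ℝ) + 1) / b ≤ c := by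
    have := le_max_right (1 : ℝ) ((n + 1) / b)
    push_cast at this ⊢
    linarith
  have hcb : (n : ℝ) + 1 ≤ c * b := by
    rw [div_le_iff₀ hb] at h2; linarith
  have h1 : 1 + t ≤ c * (1 + b * t / ((n : ℝ) + 1)) := by
    have ht2 : t ≤ c * (b * t / ((n : ℝ) + 1)) := by
      rw [mul_div_assoc'] at *
      rw [le_div_iff₀ hn]
      nlinarith
    nlinarith
  have key : (1 + t) ^ (n + 1) ≤ c ^ (n + 1) * Real.exp (b * t) := by
    calc (1 + t) ^ (n + 1) ≤ (c * (1 + b * t / ((n : ℝ) + 1))) ^ (n + 1) := by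
          apply pow_le_pow_left₀ (by linarith) h1
      _ = c ^ (n + 1) * (1 + b * t / ((n : ℝ) + 1)) ^ (n + 1) := mul_pow _ _ _
      _ ≤ c ^ (n + 1) * (Real.exp (b * t / ((n : ℝ) + 1))) ^ (n + 1) := by
          have h3 : 1 + b * t / ((n : ℝ) + 1) ≤ Real.exp (b * t / ((n : ℝ) + 1)) := by
            have := Real.add_one_le_exp (b * t / ((n : ℝ) + 1)); linarith
          have h4 : (1 + b * t / ((n : ℝ) + 1)) ^ (n + 1)
              ≤ (Real.exp (b * t / ((n : ℝ) + 1))) ^ (n + 1) :=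
            pow_le_pow_left₀ (by positivity) h3 _
          nlinarith [pow_pos hc0 (n + 1)]
      _ = c ^ (n + 1) * Real.exp (b * t) := by
          rw [← Real.exp_nat_mul]
          congr 1
          push_cast
          field_simp
  have hpos : (0 : ℝ) < (1 + t) ^ (n + 1) := by positivity
  have hrpow : (1 + t) ^ (-((n : ℝ) + 1)) = ((1 + t) ^ (n + 1))⁻¹ := by
    rw [show -((n : ℝ) + 1) = -((n + 1 : ℕ) : ℝ) by push_cast; ring,
      Real.rpow_neg (by linarith), Real.rpow_natCast]
  rw [hrpow, ← div_eq_mul_inv, le_div_iff₀ hpos, Real.exp_neg]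
  rw [inv_mul_le_iff₀ (Real.exp_pos _)] at *
  nlinarith [Real.exp_pos (b * t)]

lemma aux_integrable (n : ℕ) {b : ℝ} (hb : 0 < b) :
    Integrable (fun z : EuclideanSpace ℝ (Fin n) => Real.exp (-(b * ‖z‖))) := by
  have hnr : (Module.finrank ℝ (EuclideanSpace ℝ (Fin n)) : ℝ) < (n : ℝ) + 1 := by
    simp [finrank_euclideanSpace_fin]
  have hint : Integrable (fun z : EuclideanSpace ℝ (Fin n) => (1 + ‖z‖) ^ (-((n : ℝ) + 1))) :=
    integrable_one_add_norm hnr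
  refine (hint.const_mul ((max 1 ((n + 1) / b)) ^ (n + 1))).mono' ?_ ?_
  · exact (Real.continuous_exp.comp ((continuous_const.mul continuous_norm).neg)).aestronglyMeasurable
  · filter_upwards with z
    rw [Real.norm_eq_abs, abs_of_nonneg (Real.exp_nonneg _)]
    exact aux_exp_bound hb n ‖z‖ (norm_nonneg z)

/-- For `f_upper(x) = a₃ e^{-a₄‖x‖}` on `ℝⁿ`, scales `0 < ρ_s ≤ ρ_t`,
`θ ∈ [0,1)`, `ε ∈ (0,1)`, there is `M = M(n,a₃,a₄,θ,ε)` such that for all `x, y`: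
`∫ ρ_t^n ρ_s^n f_upper((x-z)ρ_t)^{1-θ} f_upper((z-y)ρ_s)^{1-θ} dz
  ≤ M e^{-a₄ ε (1-θ) ‖x-y‖ ρ_s} ρ_t^n`. -/
theorem stmt10 {n : ℕ} (a₃ a₄ θ ε : ℝ) (ha₃ : 0 < a₃) (ha₄ : 0 < a₄)
    (hθ0 : 0 ≤ θ) (hθ1 : θ < 1) (hε0 : 0 < ε) (hε1 : ε < 1) :
    ∃ M > 0, ∀ (ρs ρt : ℝ), 0 < ρs → ρs ≤ ρt →
      ∀ x y : EuclideanSpace ℝ (Fin n),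
        (∫ z : EuclideanSpace ℝ (Fin n),
            ρt ^ n * ρs ^ n *
              (a₃ * Real.exp (-(a₄ * ‖ρt • (x - z)‖))) ^ (1 - θ) *
              (a₃ * Real.exp (-(a₄ * ‖ρs • (z - y)‖))) ^ (1 - θ))
          ≤ M * Real.exp (-(a₄ * ε * (1 - θ) * (‖x - y‖ * ρs))) * ρt ^ n := by
  have hθ : 0 < 1 - θ := sub_pos.mpr hθ1
  have hε : 0 < 1 - ε := sub_pos.mpr hε1
  set c : ℝ := a₄ * (1 - θ) with hcdef
  have hc : 0 < c := mul_pos ha₄ hθ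
  set c' : ℝ := (1 - ε) * c with hc'def
  have hc' : 0 < c' := mul_pos hε hc
  set A : ℝ := a₃ ^ (1 - θ) with hAdef
  have hA : 0 < A := Real.rpow_pos_of_pos ha₃ _
  set K : ℝ := ∫ z : EuclideanSpace ℝ (Fin n), Real.exp (-(c' * ‖z‖)) with hKdef
  have hKint : Integrable (fun z : EuclideanSpace ℝ (Fin n) => Real.exp (-(c' * ‖z‖))) :=
    aux_integrable n hc'
  have hK : 0 < K := by
    rw [hKdef]
    rw [integral_pos_iff_support_of_nonneg (fun z => Real.exp_nonneg _) hKint]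
    have : Function.support (fun z : EuclideanSpace ℝ (Fin n) => Real.exp (-(c' * ‖z‖)))
        = Set.univ := Set.eq_univ_of_forall fun z => Function.mem_support.mpr (Real.exp_pos _).ne'
    rw [this]
    exact isOpen_univ.measure_pos volume ⟨0, trivial⟩
  refine ⟨A * A * K, by positivity, ?_⟩
  intro ρs ρt hρs hst x y
  have hρt : 0 < ρt := lt_of_lt_of_le hρs hst
  set E0 : ℝ := Real.exp (-(a₄ * ε * (1 - θ) * (‖x - y‖ * ρs))) with hE0def
  -- rewrite the two factors
  have e1 : ∀ z : EuclideanSpace ℝ (Fin n),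
      (a₃ * Real.exp (-(a₄ * ‖ρt • (x - z)‖))) ^ (1 - θ)
        = A * Real.exp (-(c * (ρt * ‖x - z‖))) := by
    intro z
    have hns : ‖ρt • (x - z)‖ = ρt * ‖x - z‖ := by
      rw [norm_smul, Real.norm_eq_abs, abs_of_pos hρt]
    rw [hns, Real.mul_rpow ha₃.le (Real.exp_nonneg _), ← Real.exp_mul]
    congr 1
    rw [hcdef]; ring
  have e2 : ∀ z : EuclideanSpace ℝ (Fin n),
      (a₃ * Real.exp (-(a₄ * ‖ρs • (z - y)‖))) ^ (1 - θ)
        = A * Real.exp (-(c * (ρs * ‖z - y‖))) := by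
    intro z
    have hns : ‖ρs • (z - y)‖ = ρs * ‖z - y‖ := by
      rw [norm_smul, Real.norm_eq_abs, abs_of_pos hρs]
    rw [hns, Real.mul_rpow ha₃.le (Real.exp_nonneg _), ← Real.exp_mul]
    congr 1
    rw [hcdef]; ring
  -- the dominating function
  set C : ℝ := A * A * E0 * ρt ^ n * ρs ^ n with hCdef
  have hC : 0 < C := by
    apply mul_pos (mul_pos (mul_pos (mul_pos hA hA) (Real.exp_pos _)) (pow_pos hρt n))
      (pow_pos hρs n)
  have key : ∀ z : EuclideanSpace ℝ (Fin n),
      Real.exp (-(c * (ρt * ‖x - z‖))) * Real.exp (-(c * (ρs * ‖z - y‖)))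
        ≤ E0 * Real.exp (-(c' * ρs * ‖z - y‖)) := by
    intro z
    rw [hE0def, ← Real.exp_add, ← Real.exp_add]
    apply Real.exp_le_exp.mpr
    have tri : ‖x - y‖ ≤ ‖x - z‖ + ‖z - y‖ := norm_sub_le_norm_sub_add_norm_sub x z y
    have h1 : ρs * ‖x - y‖ ≤ ρt * ‖x - z‖ + ρs * ‖z - y‖ := by
      have h1a := mul_le_mul_of_nonneg_left tri hρs.le
      have h1b : ρs * ‖x - z‖ ≤ ρt * ‖x - z‖ :=
        mul_le_mul_of_nonneg_right hst (norm_nonneg _)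
      nlinarith
    have h2 : ρs * ‖z - y‖ ≤ ρt * ‖x - z‖ + ρs * ‖z - y‖ := by
      nlinarith [norm_nonneg (x - z)]
    have hεc : 0 < ε * c := mul_pos hε0 hc
    rw [show a₄ * ε * (1 - θ) * (‖x - y‖ * ρs) = ε * c * (ρs * ‖x - y‖) from by
        rw [hcdef]; ring,
      show c' * ρs * ‖z - y‖ = (1 - ε) * c * (ρs * ‖z - y‖) from by
        rw [hc'def]; ring]
    nlinarith [mul_le_mul_of_nonneg_left h1 hεc.le,
      mul_le_mul_of_nonneg_left h2 (mul_pos hε hc).le]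
  have hpt : ∀ z : EuclideanSpace ℝ (Fin n),
      ρt ^ n * ρs ^ n *
          (a₃ * Real.exp (-(a₄ * ‖ρt • (x - z)‖))) ^ (1 - θ) *
          (a₃ * Real.exp (-(a₄ * ‖ρs • (z - y)‖))) ^ (1 - θ)
        ≤ C * Real.exp (-(c' * ρs * ‖z - y‖)) := by
    intro z
    rw [e1 z, e2 z]
    have step : (ρt ^ n * ρs ^ n * (A * A)) *
        (Real.exp (-(c * (ρt * ‖x - z‖))) * Real.exp (-(c * (ρs * ‖z - y‖))))
        ≤ (ρt ^ n * ρs ^ n * (A * A)) * (E0 * Real.exp (-(c' * ρs * ‖z - y‖))) := by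
      apply mul_le_mul_of_nonneg_left (key z)
      have := pow_pos hρt n
      have := pow_pos hρs n
      positivity
    calc ρt ^ n * ρs ^ n * (A * Real.exp (-(c * (ρt * ‖x - z‖)))) *
          (A * Real.exp (-(c * (ρs * ‖z - y‖))))
        = (ρt ^ n * ρs ^ n * (A * A)) *
          (Real.exp (-(c * (ρt * ‖x - z‖))) * Real.exp (-(c * (ρs * ‖z - y‖)))) := by ring
      _ ≤ (ρt ^ n * ρs ^ n * (A * A)) * (E0 * Real.exp (-(c' * ρs * ‖z - y‖))) := step
      _ = C * Real.exp (-(c' * ρs * ‖z - y‖)) := by rw [hCdef]; ring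
  have hb : 0 < c' * ρs := mul_pos hc' hρs
  have hdint : Integrable (fun z : EuclideanSpace ℝ (Fin n) =>
      C * Real.exp (-(c' * ρs * ‖z - y‖))) := by
    have h1 : Integrable (fun z : EuclideanSpace ℝ (Fin n) =>
        Real.exp (-(c' * ρs * ‖z - y‖))) := by
      exact (aux_integrable n hb).comp_sub_right y
    exact h1.const_mul C
  have hmono : (∫ z : EuclideanSpace ℝ (Fin n),
        ρt ^ n * ρs ^ n *
          (a₃ * Real.exp (-(a₄ * ‖ρt • (x - z)‖))) ^ (1 - θ) *
          (a₃ * Real.exp (-(a₄ * ‖ρs • (z - y)‖))) ^ (1 - θ))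
      ≤ ∫ z : EuclideanSpace ℝ (Fin n), C * Real.exp (-(c' * ρs * ‖z - y‖)) := by
    apply integral_mono_of_nonneg
    · filter_upwards with z
      have h1 : (0:ℝ) ≤ (a₃ * Real.exp (-(a₄ * ‖ρt • (x - z)‖))) ^ (1 - θ) :=
        Real.rpow_nonneg (by positivity) _
      have h2 : (0:ℝ) ≤ (a₃ * Real.exp (-(a₄ * ‖ρs • (z - y)‖))) ^ (1 - θ) :=
        Real.rpow_nonneg (by positivity) _
      have h3 := pow_pos hρt n
      have h4 := pow_pos hρs n
      positivity
    · exact hdint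
    · filter_upwards with z using hpt z
  -- compute the integral of the dominating function
  have hIcalc : (∫ z : EuclideanSpace ℝ (Fin n), Real.exp (-(c' * ρs * ‖z - y‖)))
      = (ρs ^ n)⁻¹ * K := by
    have h1 : (∫ z : EuclideanSpace ℝ (Fin n), Real.exp (-(c' * ρs * ‖z - y‖)))
        = ∫ z : EuclideanSpace ℝ (Fin n), Real.exp (-(c' * ρs * ‖z‖)) :=
      integral_sub_right_eq_self (fun w : EuclideanSpace ℝ (Fin n) =>
        Real.exp (-(c' * ρs * ‖w‖))) y
    rw [h1]
    have h2 := Measure.integral_comp_smul_of_nonneg (μ := (volume : Measure (EuclideanSpace ℝ (Fin n))))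
      (fun w : EuclideanSpace ℝ (Fin n) => Real.exp (-(c' * ‖w‖))) ρs (hR := hρs.le)
    simp only [norm_smul, Real.norm_eq_abs, abs_of_pos hρs, smul_eq_mul,
      finrank_euclideanSpace_fin] at h2
    rw [show (fun z : EuclideanSpace ℝ (Fin n) => Real.exp (-(c' * ρs * ‖z‖)))
        = fun z : EuclideanSpace ℝ (Fin n) => Real.exp (-(c' * (ρs * ‖z‖))) by
      funext z; rw [mul_assoc]]
    rw [h2, hKdef]
  calc (∫ z : EuclideanSpace ℝ (Fin n),
        ρt ^ n * ρs ^ n *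
          (a₃ * Real.exp (-(a₄ * ‖ρt • (x - z)‖))) ^ (1 - θ) *
          (a₃ * Real.exp (-(a₄ * ‖ρs • (z - y)‖))) ^ (1 - θ))
      ≤ ∫ z : EuclideanSpace ℝ (Fin n), C * Real.exp (-(c' * ρs * ‖z - y‖)) := hmono
    _ = C * ((ρs ^ n)⁻¹ * K) := by rw [integral_const_mul, hIcalc]
    _ = A * A * K * E0 * ρt ^ n := by
        rw [hCdef]
        field_simp
    _ = A * A * K * Real.exp (-(a₄ * ε * (1 - θ) * (‖x - y‖ * ρs))) * ρt ^ n := by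
        rw [hE0def]
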